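/- Assume C_2 > 0 and let L = lim_{n→∞} (1/n^d) · log C_n. Then for every n ≥ 1, (1/n^d) · (log C_{n+1} − q_d(n) · log |Σ|) ≤ L ≤ (1/n^d) · log C_n, where q_d(n) = (2^d − 1) · Σ_{k=0}^{d−1} (binom(d,k)/(2^d − 2^k)) · n^k. -/

import Mathlib

/-- A pattern `P` on the cube `[1,n]^d` (coordinates encoded by `Fin n`, where
`j : Fin n` represents the coordinate `j+1 ∈ [1,n]`) is locally admissible if no
two adjacent values form a forbidden pair. -/
def IsLocAdm {A : Type*} (d n : ℕ) (F : Fin d → Set (A × A))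
    (P : (Fin d → Fin n) → A) : Prop :=
  ∀ (x : Fin d → Fin n) (k : Fin d) (h : (x k : ℕ) + 1 < n),
    (P x, P (Function.update x k ⟨(x k : ℕ) + 1, h⟩)) ∉ F k

/-- `patCount d F n` is `C_n`, the number of locally admissible patterns on `[1,n]^d`. -/
noncomputable def patCount {A : Type*} [Fintype A] (d : ℕ) (F : Fin d → Set (A × A))
    (n : ℕ) : ℕ :=
  Nat.card {P : (Fin d → Fin n) → A // IsLocAdm d n F P}

/-- A configuration `x : ℤ^d → A` is globally admissible if no two adjacent values
form a forbidden pair. -/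
def IsGlobAdm {A : Type*} (d : ℕ) (F : Fin d → Set (A × A))
    (x : (Fin d → ℤ) → A) : Prop :=
  ∀ (v : Fin d → ℤ) (k : Fin d),
    (x v, x (Function.update v k (v k + 1))) ∉ F k

/-- The polynomial `q_d(m) = (2^d − 1) · Σ_{k=0}^{d−1} (binom(d,k)/(2^d − 2^k)) · m^k`,
as a real function. -/
noncomputable def qReal (d : ℕ) (m : ℝ) : ℝ :=
  (2 ^ d - 1) * ∑ k ∈ Finset.range d, (d.choose k : ℝ) / (2 ^ d - 2 ^ k) * m ^ k


section Aux
variable {A : Type*} [Fintype A] {d : ℕ} (F : Fin d → Set (A × A))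

def BBox (d : ℕ) (s : Fin d → ℕ) : Type _ := {x : Fin d → ℕ // ∀ j, x j < s j}

def bboxEquiv (s : Fin d → ℕ) : BBox d s ≃ (∀ j, Fin (s j)) where
  toFun x j := ⟨x.1 j, x.2 j⟩
  invFun y := ⟨fun j => y j, fun j => (y j).2⟩
  left_inv _ := rfl
  right_inv _ := rfl

instance (s : Fin d → ℕ) : Finite (BBox d s) := Finite.of_equiv _ (bboxEquiv s).symm

lemma bbox_card (s : Fin d → ℕ) : Nat.card (BBox d s) = ∏ j, s j := by
  rw [Nat.card_congr (bboxEquiv s), Nat.card_pi]; simp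

def BAdm (s : Fin d → ℕ) (P : BBox d s → A) : Prop :=
  ∀ (x y : BBox d s) (k : Fin d), y.1 = Function.update x.1 k (x.1 k + 1) → (P x, P y) ∉ F k

noncomputable def bCount (s : Fin d → ℕ) : ℕ :=
  Nat.card {P : BBox d s → A // BAdm F s P}

lemma bCount_eq_patCount (n : ℕ) : bCount F (fun _ : Fin d => n) = patCount d F n := by
  apply Nat.card_congr
  apply Equiv.subtypeEquiv (Equiv.arrowCongr (bboxEquiv (fun _ : Fin d => n)) (Equiv.refl A))
  intro P
  constructor
  · intro hP x k h
    have hx' : ∀ j, (fun j => (x j : ℕ)) j < n := fun j => (x j).2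
    refine hP ⟨fun j => (x j : ℕ), hx'⟩
      ⟨fun j => ((Function.update x k ⟨(x k : ℕ) + 1, h⟩ : Fin d → Fin n) j : ℕ), fun j => (Function.update x k _ j).2⟩ k ?_
    funext j
    rcases eq_or_ne j k with rfl | hj
    · simp
    · simp [Function.update_of_ne hj]
  · intro hP x y k hy
    have h : x.1 k + 1 < n := by
      have := y.2 k
      rw [hy] at this
      simpa using this
    have := hP (bboxEquiv _ x) k h
    have harg : (Equiv.arrowCongr (bboxEquiv (fun _ : Fin d => n)) (Equiv.refl A) P)
        (Function.update (bboxEquiv _ x) k ⟨((bboxEquiv (fun _ : Fin d => n) x) k : ℕ) + 1, h⟩) = P y := by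
      simp only [Equiv.arrowCongr_apply, Function.comp_apply, Equiv.refl_apply]
      congr 1
      apply Subtype.ext
      funext j
      rcases eq_or_ne j k with rfl | hj
      · show ((Function.update (bboxEquiv (fun _ : Fin d => n) x) j ⟨_, h⟩ j : Fin n) : ℕ) = _
        simp [bboxEquiv, hy, Equiv.coe_fn_symm_mk]
      · show ((Function.update (bboxEquiv (fun _ : Fin d => n) x) k ⟨_, h⟩ j : Fin n) : ℕ) = _
        simp [bboxEquiv, hy, Equiv.coe_fn_symm_mk, Function.update_of_ne hj]
        rfl
    have harg2 : (Equiv.arrowCongr (bboxEquiv (fun _ : Fin d => n)) (Equiv.refl A) P)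
        (bboxEquiv _ x) = P x := by
      simp [bboxEquiv]
    rw [harg, harg2] at this
    exact this


lemma bCount_le (s : Fin d → ℕ) : bCount F s ≤ Fintype.card A ^ ∏ j, s j := by
  have h : bCount F s ≤ Nat.card (BBox d s → A) :=
    Nat.card_le_card_of_injective _ Subtype.val_injective
  rwa [Nat.card_fun, bbox_card, Nat.card_eq_fintype_card] at h

lemma bCount_pos (hF : ∀ (i : Fin d) (a b : A), (a, b) ∈ F i ↔ (b, a) ∈ F i) (h2 : 0 < patCount d F 2) (s : Fin d → ℕ) : 0 < bCount F s := by
  rw [← bCount_eq_patCount] at h2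
  rw [bCount, Nat.card_pos_iff] at h2 ⊢
  refine ⟨?_, Subtype.finite⟩
  obtain ⟨⟨P, hP⟩⟩ := h2.1
  refine ⟨⟨fun x => P ⟨fun j => x.1 j % 2, fun j => Nat.mod_lt _ two_pos⟩, ?_⟩⟩
  intro x y k hy hmem
  set u : BBox d (fun _ : Fin d => 2) := ⟨fun j => x.1 j % 2, fun j => Nat.mod_lt _ two_pos⟩
  set v : BBox d (fun _ : Fin d => 2) := ⟨fun j => y.1 j % 2, fun j => Nat.mod_lt _ two_pos⟩
  have hyk : y.1 k = x.1 k + 1 := by rw [hy]; simp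
  have hyj : ∀ j, j ≠ k → y.1 j = x.1 j := by
    intro j hj; rw [hy, Function.update_of_ne hj]
  rcases Nat.mod_two_eq_zero_or_one (x.1 k) with h0 | h1
  · refine hP u v k ?_ hmem
    funext j
    rcases eq_or_ne j k with rfl | hj
    · show y.1 j % 2 = Function.update u.1 j (u.1 j + 1) j
      rw [Function.update_self, hyk]; show _ = x.1 j % 2 + 1; omega
    · show y.1 j % 2 = Function.update u.1 k (u.1 k + 1) j
      rw [Function.update_of_ne hj, hyj j hj]
  · refine hP v u k ?_ ((hF k _ _).mp hmem)
    funext j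
    rcases eq_or_ne j k with rfl | hj
    · show x.1 j % 2 = Function.update v.1 j (v.1 j + 1) j
      rw [Function.update_self]; show _ = y.1 j % 2 + 1; rw [hyk]; omega
    · show x.1 j % 2 = Function.update v.1 k (v.1 k + 1) j
      rw [Function.update_of_ne hj]; show _ = y.1 j % 2; rw [hyj j hj]

lemma bCount_mul (n m : ℕ) (hn : 0 < n) :
    bCount F (fun _ : Fin d => n * m) ≤ bCount F (fun _ : Fin d => n) ^ m ^ d := by
  classical
  set Y := {P : BBox d (fun _ : Fin d => n) → A // BAdm F _ P}
  have bound : ∀ (b : BBox d (fun _ : Fin d => m)) (x : BBox d (fun _ : Fin d => n))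
      (j : Fin d), b.1 j * n + x.1 j < n * m := by
    intro b x j
    have hb : b.1 j + 1 ≤ m := b.2 j
    have hx : x.1 j < n := x.2 j
    have h2 : b.1 j * n + n ≤ m * n := by
      calc b.1 j * n + n = (b.1 j + 1) * n := by ring
      _ ≤ m * n := Nat.mul_le_mul_right _ hb
    have h1 : b.1 j * n + x.1 j < b.1 j * n + n := Nat.add_lt_add_left hx _
    rw [mul_comm n m]
    exact lt_of_lt_of_le h1 h2
  set Phi : {P : BBox d (fun _ : Fin d => n * m) → A // BAdm F _ P} →
      (BBox d (fun _ : Fin d => m) → Y) := fun P b =>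
    ⟨fun x => P.1 ⟨fun j => b.1 j * n + x.1 j, fun j => bound b x j⟩, by
      intro x y k hy hmem
      refine P.2 ⟨fun j => b.1 j * n + x.1 j, fun j => bound b x j⟩
        ⟨fun j => b.1 j * n + y.1 j, fun j => bound b y j⟩ k ?_ hmem
      funext j
      rcases eq_or_ne j k with rfl | hj
      · show b.1 j * n + y.1 j = _
        rw [Function.update_self, hy, Function.update_self]
        show b.1 j * n + (x.1 j + 1) = b.1 j * n + x.1 j + 1
        omega
      · show b.1 j * n + y.1 j = _
        rw [Function.update_of_ne hj, hy, Function.update_of_ne hj]⟩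
  have hinj : Function.Injective Phi := by
    intro P P' h
    apply Subtype.ext
    funext x
    have hbb : ∀ j, x.1 j / n < m := by
      intro j
      rw [Nat.div_lt_iff_lt_mul hn, mul_comm m n]
      exact x.2 j
    have key := congrFun (congrArg Subtype.val
      (congrFun h ⟨fun j => x.1 j / n, hbb⟩)) ⟨fun j => x.1 j % n, fun j => Nat.mod_lt _ hn⟩
    simp only [Phi] at key
    show P.1 x = P'.1 x
    convert key using 2 <;>
      exact congrArg _ (Subtype.ext (funext fun j => (Nat.div_add_mod' (x.1 j) n).symm))
  have hle := Nat.card_le_card_of_injective Phi hinj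
  rwa [Nat.card_fun, bbox_card, Finset.prod_const, Finset.card_univ, Fintype.card_fin] at hle


lemma bCount_double (hF : ∀ (i : Fin d) (a b : A), (a, b) ∈ F i ↔ (b, a) ∈ F i)
    (s : Fin d → ℕ) (i : Fin d) (a : ℕ) (hs : s i = a + 1) :
    bCount F s ^ 2 ≤
      Fintype.card A ^ (∏ j ∈ Finset.univ.erase i, s j) *
        bCount F (Function.update s i (2 * a + 1)) := by
  classical
  set s' := Function.update s i (2 * a + 1) with hs'def
  have hs'i : s' i = 2 * a + 1 := Function.update_self ..
  have hs'j : ∀ j, j ≠ i → s' j = s j := fun j hj => Function.update_of_ne hj _ _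
  set Y := {P : BBox d s → A // BAdm F s P}
  set X := {P : BBox d s' → A // BAdm F s' P}
  set Z := BBox d (Function.update s i 1) → A
  -- the top-layer map
  have hφbd : ∀ (z : BBox d (Function.update s i 1)) (j : Fin d),
      Function.update z.1 i a j < s j := by
    intro z j
    rcases eq_or_ne j i with rfl | hj
    · rw [Function.update_self, hs]; omega
    · rw [Function.update_of_ne hj]
      have := z.2 j
      rwa [Function.update_of_ne hj] at this
  set φ : Y → Z := fun P z => P.1 ⟨Function.update z.1 i a, hφbd z⟩ with hφdef
  -- bounds for the two branches of the gluing
  have hlow : ∀ x : BBox d s', x.1 i ≤ a → ∀ j, x.1 j < s j := by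
    intro x hx j
    rcases eq_or_ne j i with rfl | hj
    · omega
    · have := x.2 j; rwa [hs'j j hj] at this
  have hupp : ∀ x : BBox d s', ¬ x.1 i ≤ a → ∀ j, Function.update x.1 i (2 * a - x.1 i) j < s j := by
    intro x hx j
    rcases eq_or_ne j i with rfl | hj
    · rw [Function.update_self, hs]; omega
    · rw [Function.update_of_ne hj]
      have := x.2 j; rwa [hs'j j hj] at this
  -- the gluing map
  set glue : Y → Y → BBox d s' → A := fun P Q x =>
    if h : x.1 i ≤ a then P.1 ⟨x.1, hlow x h⟩
    else Q.1 ⟨Function.update x.1 i (2 * a - x.1 i), hupp x h⟩ with hgluedef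
  -- consequence of equal top layers
  have hPQ : ∀ (P Q : Y), φ P = φ Q → ∀ (w : Fin d → ℕ)
      (hw : ∀ j, Function.update w i a j < s j),
      P.1 ⟨Function.update w i a, hw⟩ = Q.1 ⟨Function.update w i a, hw⟩ := by
    intro P Q h w hw
    have hz : ∀ j, Function.update w i 0 j < Function.update s i 1 j := by
      intro j
      rcases eq_or_ne j i with rfl | hj
      · simp
      · rw [Function.update_of_ne hj, Function.update_of_ne hj]
        have := hw j; rwa [Function.update_of_ne hj] at this
    have hcf := congrFun h ⟨Function.update w i 0, hz⟩
    simp only [hφdef] at hcf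
    convert hcf using 2 <;>
      exact congrArg _ (Subtype.ext (by
        funext j
        rcases eq_or_ne j i with rfl | hj
        · simp
        · simp [Function.update_of_ne hj]))
  -- admissibility of the gluing
  have hglueadm : ∀ (P Q : Y), φ P = φ Q → BAdm F s' (glue P Q) := by
    intro P Q hpq x y k hy hmem
    simp only [hgluedef] at hmem
    have hyk : y.1 k = x.1 k + 1 := by rw [hy, Function.update_self]
    have hyj : ∀ j, j ≠ k → y.1 j = x.1 j := fun j hj => by
      rw [hy, Function.update_of_ne hj]
    rcases eq_or_ne k i with rfl | hki
    · have hxk2 : x.1 k + 1 < 2 * a + 1 := by rw [← hyk, ← hs'i]; exact y.2 k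
      rcases Nat.lt_or_ge (x.1 k + 1) (a + 1) with c1 | c2
      · -- both in the P region
        rw [dif_pos (by omega : x.1 k ≤ a), dif_pos (by omega : y.1 k ≤ a)] at hmem
        exact P.2 _ _ k hy hmem
      rcases Nat.eq_or_lt_of_le c2 with c2 | c3
      · -- crossing the reflection hyperplane
        have hxa : x.1 k = a := by omega
        have ha1 : 1 ≤ a := by omega
        rw [dif_pos (le_of_eq hxa), dif_neg (by omega)] at hmem
        -- rewrite the P-value as a Q-value using equal top layers
        have hwx : ∀ j, Function.update x.1 k a j < s j := by
          intro j
          rcases eq_or_ne j k with rfl | hj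
          · rw [Function.update_self, hs]; omega
          · rw [Function.update_of_ne hj]; exact hlow x (le_of_eq hxa) j
        have hx1 : x.1 = Function.update x.1 k a := by
          rw [← hxa, Function.update_eq_self]
        have hPx : P.1 ⟨x.1, hlow x (le_of_eq hxa)⟩ = Q.1 ⟨Function.update x.1 k a, hwx⟩ := by
          have h1 : (⟨x.1, hlow x (le_of_eq hxa)⟩ : BBox d s) = ⟨Function.update x.1 k a, hwx⟩ :=
            Subtype.ext hx1
          rw [h1]
          exact hPQ P Q hpq x.1 hwx
        rw [hPx] at hmem
        -- now both are Q-values at adjacent points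
        have harg : Function.update y.1 k (2 * a - y.1 k) = Function.update x.1 k (a - 1) := by
          rw [hy, Function.update_idem, Function.update_self]
          have : 2 * a - (x.1 k + 1) = a - 1 := by omega
          rw [this]
        have hbd2 : ∀ j, Function.update x.1 k (a - 1) j < s j := by
          intro j
          rcases eq_or_ne j k with rfl | hj
          · rw [Function.update_self, hs]; omega
          · rw [Function.update_of_ne hj]; exact hlow x (le_of_eq hxa) j
        have hQadj := Q.2 ⟨Function.update x.1 k (a - 1), hbd2⟩ ⟨Function.update x.1 k a, hwx⟩ k
          (by
            show Function.update x.1 k a = Function.update (Function.update x.1 k (a - 1)) k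
              (Function.update x.1 k (a - 1) k + 1)
            rw [Function.update_idem, Function.update_self]
            have : a - 1 + 1 = a := by omega
            rw [this])
        refine hQadj ((hF k _ _).mp ?_)
        convert hmem using 3
        exact congrArg _ (Subtype.ext harg.symm)
      · -- both in the Q region
        rw [dif_neg (by omega : ¬ x.1 k ≤ a), dif_neg (by omega : ¬ y.1 k ≤ a)] at hmem
        have hc1 : 1 ≤ 2 * a - x.1 k := by omega
        have harg : Function.update y.1 k (2 * a - y.1 k)
            = Function.update x.1 k (2 * a - x.1 k - 1) := by
          rw [hy, Function.update_idem, Function.update_self]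
          have : 2 * a - (x.1 k + 1) = 2 * a - x.1 k - 1 := by omega
          rw [this]
        have hbd2 : ∀ j, Function.update x.1 k (2 * a - x.1 k - 1) j < s j := by
          intro j
          rcases eq_or_ne j k with rfl | hj
          · rw [Function.update_self, hs]; omega
          · rw [Function.update_of_ne hj]
            have := x.2 j; rwa [hs'j j hj] at this
        have hQadj := Q.2 ⟨Function.update x.1 k (2 * a - x.1 k - 1), hbd2⟩
          ⟨Function.update x.1 k (2 * a - x.1 k), hupp x (by omega)⟩ k
          (by
            show Function.update x.1 k (2 * a - x.1 k) = Function.update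
              (Function.update x.1 k (2 * a - x.1 k - 1)) k
              (Function.update x.1 k (2 * a - x.1 k - 1) k + 1)
            rw [Function.update_idem, Function.update_self]
            have : 2 * a - x.1 k - 1 + 1 = 2 * a - x.1 k := by omega
            rw [this])
        refine hQadj ((hF k _ _).mp ?_)
        convert hmem using 3
        exact congrArg _ (Subtype.ext harg.symm)
    · -- step in a direction other than i
      have hyi : y.1 i = x.1 i := hyj i (Ne.symm hki)
      rcases le_or_gt (x.1 i) a with c1 | c2
      · rw [dif_pos c1, dif_pos (by omega : y.1 i ≤ a)] at hmem
        exact P.2 _ _ k hy hmem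
      · rw [dif_neg (by omega), dif_neg (by omega)] at hmem
        have harg : Function.update y.1 i (2 * a - y.1 i)
            = Function.update (Function.update x.1 i (2 * a - x.1 i)) k
              (Function.update x.1 i (2 * a - x.1 i) k + 1) := by
          funext j
          rcases eq_or_ne j k with rfl | hjk
          · rw [Function.update_of_ne hki, Function.update_self, Function.update_of_ne hki, hyk]
          · rcases eq_or_ne j i with rfl | hji
            · rw [Function.update_self, Function.update_of_ne hjk, Function.update_self, hyi]
            · rw [Function.update_of_ne hji, Function.update_of_ne hjk,
                Function.update_of_ne hji, hyj j hjk]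
        have hQadj := Q.2 ⟨Function.update x.1 i (2 * a - x.1 i), hupp x (by omega)⟩
          ⟨Function.update y.1 i (2 * a - y.1 i), hupp y (by omega)⟩ k harg
        exact hQadj hmem
  -- the injection from compatible pairs into the doubled box
  set G : {pq : Y × Y // φ pq.1 = φ pq.2} → X :=
    fun pq => ⟨glue pq.1.1 pq.1.2, hglueadm _ _ pq.2⟩ with hGdef
  have hGinj : Function.Injective G := by
    intro pq pq' h
    have hval : glue pq.1.1 pq.1.2 = glue pq'.1.1 pq'.1.2 := congrArg Subtype.val h
    -- recover the first component
    have hPeq : ∀ x : BBox d s, pq.1.1.1 x = pq'.1.1.1 x := by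
      intro x
      have hlift : ∀ j, x.1 j < s' j := by
        intro j
        rcases eq_or_ne j i with rfl | hj
        · rw [hs'i]; have := x.2 j; omega
        · rw [hs'j j hj]; exact x.2 j
      have hxa : x.1 i ≤ a := by have := x.2 i; omega
      have h1 := congrFun hval ⟨x.1, hlift⟩
      simp only [hgluedef] at h1
      rw [dif_pos hxa, dif_pos hxa] at h1
      have e : (⟨x.1, hlow ⟨x.1, hlift⟩ hxa⟩ : BBox d s) = x := Subtype.ext rfl
      rwa [e] at h1
    -- recover the second component
    have hQeq : ∀ x : BBox d s, pq.1.2.1 x = pq'.1.2.1 x := by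
      intro x
      rcases eq_or_ne (x.1 i) a with hxa | hxa
      · -- on the reflection hyperplane: go through the top layer
        have hw : ∀ j, Function.update x.1 i a j < s j := by
          intro j
          rcases eq_or_ne j i with rfl | hj
          · rw [Function.update_self, hs]; omega
          · rw [Function.update_of_ne hj]; exact x.2 j
        have e1 : x = ⟨Function.update x.1 i a, hw⟩ := by
          apply Subtype.ext
          show x.1 = Function.update x.1 i a
          rw [← hxa]
          exact (Function.update_eq_self _ _).symm
        rw [e1, ← hPQ _ _ pq.2 x.1 hw, ← hPQ _ _ pq'.2 x.1 hw]
        exact hPeq _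
      · -- otherwise: evaluate at the reflected point
        have hxlt : x.1 i < a := by have := x.2 i; omega
        have hlift : ∀ j, Function.update x.1 i (2 * a - x.1 i) j < s' j := by
          intro j
          rcases eq_or_ne j i with rfl | hj
          · rw [Function.update_self, hs'i]; omega
          · rw [Function.update_of_ne hj, hs'j j hj]; exact x.2 j
        have hc : ¬ ((⟨Function.update x.1 i (2 * a - x.1 i), hlift⟩ : BBox d s').1 i ≤ a) := by
          show ¬ (Function.update x.1 i (2 * a - x.1 i) i ≤ a)
          rw [Function.update_self]; omega
        have h1 := congrFun hval ⟨Function.update x.1 i (2 * a - x.1 i), hlift⟩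
        simp only [hgluedef] at h1
        rw [dif_neg hc, dif_neg hc] at h1
        have e : (⟨Function.update (Function.update x.1 i (2 * a - x.1 i)) i
            (2 * a - Function.update x.1 i (2 * a - x.1 i) i),
            hupp ⟨Function.update x.1 i (2 * a - x.1 i), hlift⟩ hc⟩ : BBox d s) = x := by
          apply Subtype.ext
          show Function.update (Function.update x.1 i (2 * a - x.1 i)) i
            (2 * a - Function.update x.1 i (2 * a - x.1 i) i) = x.1
          rw [Function.update_idem, Function.update_self]
          have h2 : 2 * a - (2 * a - x.1 i) = x.1 i := by omega
          rw [h2, Function.update_eq_self]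
        rwa [e] at h1
    apply Subtype.ext
    apply Prod.ext
    · exact Subtype.ext (funext hPeq)
    · exact Subtype.ext (funext hQeq)
  -- counting
  letI : Fintype A := ‹Fintype A›
  letI : Fintype Y := Fintype.ofFinite Y
  letI : Fintype X := Fintype.ofFinite X
  letI : Fintype Z := Fintype.ofFinite Z
  letI : Fintype {pq : Y × Y // φ pq.1 = φ pq.2} := Fintype.ofFinite _
  have h1 : Fintype.card Y = ∑ z : Z, (Finset.univ.filter fun y : Y => φ y = z).card := by
    rw [← Finset.card_univ]
    exact Finset.card_eq_sum_card_fiberwise (fun y _ => Finset.mem_univ _)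
  have h2 : ((∑ z : Z, ((Finset.univ.filter fun y : Y => φ y = z).card : ℤ)))^2 ≤
      (Fintype.card Z : ℤ) * ∑ z : Z, ((Finset.univ.filter fun y : Y => φ y = z).card : ℤ)^2 := by
    have := sq_sum_le_card_mul_sum_sq (s := (Finset.univ : Finset Z))
      (f := fun z => ((Finset.univ.filter fun y : Y => φ y = z).card : ℤ))
    simpa using this
  have h3 : ∑ z : Z, (Finset.univ.filter fun y : Y => φ y = z).card ^ 2 ≤ Fintype.card X := by
    have hpair : ∀ z : Z, (Finset.univ.filter fun y : Y => φ y = z).card ^ 2 =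
        ((Finset.univ ×ˢ Finset.univ).filter
          fun pq : Y × Y => φ pq.1 = z ∧ φ pq.2 = z).card := by
      intro z
      have hprod : ((Finset.univ ×ˢ Finset.univ).filter
          fun pq : Y × Y => φ pq.1 = z ∧ φ pq.2 = z)
          = (Finset.univ.filter fun y : Y => φ y = z) ×ˢ
            (Finset.univ.filter fun y : Y => φ y = z) := by
        ext pq
        simp only [Finset.mem_filter, Finset.mem_product, Finset.mem_univ, true_and]
      rw [hprod, Finset.card_product, sq]
    have hS : ∑ z : Z, ((Finset.univ ×ˢ Finset.univ).filter
        fun pq : Y × Y => φ pq.1 = z ∧ φ pq.2 = z).card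
        = ((Finset.univ ×ˢ Finset.univ).filter
            fun pq : Y × Y => φ pq.1 = φ pq.2).card := by
      rw [Finset.card_eq_sum_card_fiberwise
        (f := fun pq : Y × Y => φ pq.1) (t := Finset.univ) (fun pq _ => Finset.mem_univ _)]
      apply Finset.sum_congr rfl
      intro z _
      congr 1
      ext pq
      simp only [Finset.mem_filter, Finset.mem_product, Finset.mem_univ, true_and]
      constructor
      · rintro ⟨hz1, hz2⟩
        exact ⟨hz1.trans hz2.symm, hz1⟩
      · rintro ⟨h12, hz⟩
        exact ⟨hz, h12.symm.trans hz⟩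
    calc ∑ z : Z, (Finset.univ.filter fun y : Y => φ y = z).card ^ 2
        = ∑ z : Z, ((Finset.univ ×ˢ Finset.univ).filter
            fun pq : Y × Y => φ pq.1 = z ∧ φ pq.2 = z).card := Finset.sum_congr rfl fun z _ => hpair z
      _ = ((Finset.univ ×ˢ Finset.univ).filter fun pq : Y × Y => φ pq.1 = φ pq.2).card := hS
      _ = Fintype.card {pq : Y × Y // φ pq.1 = φ pq.2} := by
          rw [Finset.univ_product_univ]
          exact (Fintype.card_of_subtype _ (fun pq => by
            simp only [Finset.mem_filter, Finset.mem_univ, true_and])).symm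
      _ ≤ Fintype.card X := Fintype.card_le_of_injective G hGinj
  have hfinal : Fintype.card Y ^ 2 ≤ Fintype.card Z * Fintype.card X := by
    calc Fintype.card Y ^ 2
        = (∑ z : Z, (Finset.univ.filter fun y : Y => φ y = z).card) ^ 2 := by rw [h1]
      _ ≤ Fintype.card Z * ∑ z : Z, (Finset.univ.filter fun y : Y => φ y = z).card ^ 2 := by
          exact_mod_cast h2
      _ ≤ Fintype.card Z * Fintype.card X := Nat.mul_le_mul_left _ h3
  have hZcard : Fintype.card Z = Fintype.card A ^ (∏ j ∈ Finset.univ.erase i, s j) := by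
    have hz1 : Nat.card Z = Nat.card A ^ Nat.card (BBox d (Function.update s i 1)) :=
      Nat.card_fun
    rw [Nat.card_eq_fintype_card, Nat.card_eq_fintype_card] at hz1
    rw [hz1, bbox_card, Finset.prod_update_of_mem (Finset.mem_univ i), one_mul,
      Finset.sdiff_singleton_eq_erase]
  show Nat.card Y ^ 2 ≤ Fintype.card A ^ (∏ j ∈ Finset.univ.erase i, s j) * Nat.card X
  rw [Nat.card_eq_fintype_card, Nat.card_eq_fintype_card, ← hZcard]
  exact hfinal



lemma geom_id (x : ℕ) : ∀ d : ℕ,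
    (∑ t ∈ Finset.range d, x ^ t * (x + 1) ^ (d - 1 - t)) + x ^ d = (x + 1) ^ d := by
  intro d
  induction d with
  | zero => simp
  | succ d ih =>
    rw [Finset.sum_range_succ']
    have e1 : ∀ t ∈ Finset.range d, x ^ (t + 1) * (x + 1) ^ (d + 1 - 1 - (t + 1))
        = x * (x ^ t * (x + 1) ^ (d - 1 - t)) := by
      intro t ht
      have h : d + 1 - 1 - (t + 1) = d - 1 - t := by omega
      rw [h, pow_succ]
      ring
    rw [Finset.sum_congr rfl e1, ← Finset.mul_sum]
    have h0 : d + 1 - 1 - 0 = d := by omega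
    rw [h0]
    have hrhs : (x + 1) ^ (d + 1)
        = x * ((∑ t ∈ Finset.range d, x ^ t * (x + 1) ^ (d - 1 - t)) + x ^ d) + (x + 1) ^ d := by
      rw [ih]
      ring
    rw [hrhs]
    ring

def stair (d N i : ℕ) : Fin d → ℕ := fun j => if (j : ℕ) < i then 2 * N + 1 else N + 1

lemma card_filter_lt {i : ℕ} (hi : i ≤ d) :
    (Finset.univ.filter fun j : Fin d => (j : ℕ) < i).card = i := by
  have h : Finset.univ.filter (fun j : Fin d => (j : ℕ) < i)
      = Finset.map (Fin.castLEEmb hi) Finset.univ := by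
    ext j
    simp only [Finset.mem_filter, Finset.mem_univ, true_and, Finset.mem_map]
    constructor
    · intro hj
      exact ⟨⟨(j : ℕ), hj⟩, Fin.ext rfl⟩
    · rintro ⟨k, rfl⟩
      exact k.2
  rw [h, Finset.card_map, Finset.card_univ, Fintype.card_fin]

lemma stair_step {N i : ℕ} (hi : i < d) :
    Function.update (stair d N i) ⟨i, hi⟩ (2 * N + 1) = stair d N (i + 1) := by
  funext j
  rcases eq_or_ne j ⟨i, hi⟩ with rfl | hj
  · rw [Function.update_self]
    simp [stair]
  · rw [Function.update_of_ne hj]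
    have hji : (j : ℕ) ≠ i := fun h => hj (Fin.ext h)
    simp only [stair]
    rcases Nat.lt_or_ge (j : ℕ) i with h | h
    · rw [if_pos h, if_pos (by omega)]
    · rw [if_neg (by omega), if_neg (by omega)]

lemma stair_prod_erase {N i : ℕ} (hi : i < d) :
    ∏ j ∈ Finset.univ.erase ⟨i, hi⟩, stair d N i j = (2 * N + 1) ^ i * (N + 1) ^ (d - 1 - i) := by
  have hY : (0 : ℕ) < N + 1 := Nat.succ_pos _
  apply Nat.eq_of_mul_eq_mul_right hY
  have hval : stair d N i ⟨i, hi⟩ = N + 1 := by simp [stair]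
  calc (∏ j ∈ Finset.univ.erase ⟨i, hi⟩, stair d N i j) * (N + 1)
      = (∏ j ∈ Finset.univ.erase ⟨i, hi⟩, stair d N i j) * stair d N i ⟨i, hi⟩ := by rw [hval]
    _ = ∏ j, stair d N i j := Finset.prod_erase_mul _ _ (Finset.mem_univ _)
    _ = (2 * N + 1) ^ i * (N + 1) ^ (d - i) := by
        rw [show (fun j => stair d N i j) = fun j : Fin d =>
          if (j : ℕ) < i then 2 * N + 1 else N + 1 from rfl]
        rw [Finset.prod_ite, Finset.prod_const, Finset.prod_const,
          card_filter_lt (le_of_lt hi)]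
        congr 1
        rw [Finset.filter_not, Finset.card_sdiff_of_subset (Finset.filter_subset _ _)]
        rw [card_filter_lt (le_of_lt hi), Finset.card_univ, Fintype.card_fin]
    _ = (2 * N + 1) ^ i * (N + 1) ^ (d - 1 - i) * (N + 1) := by
        rw [mul_assoc, ← pow_succ]
        congr 2
        omega

lemma stair_chain (hF : ∀ (i : Fin d) (a b : A), (a, b) ∈ F i ↔ (b, a) ∈ F i)
    (N : ℕ) : ∀ i ≤ d,
    bCount F (stair d N 0) ^ 2 ^ i ≤
      Fintype.card A ^ (∑ t ∈ Finset.range i, 2 ^ (i - 1 - t) *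
          ((2 * N + 1) ^ t * (N + 1) ^ (d - 1 - t))) *
        bCount F (stair d N i) := by
  intro i
  induction i with
  | zero => intro _; simpa using Nat.le_refl _
  | succ i ih =>
    intro hi1
    have hi : i < d := hi1
    have step := bCount_double F hF (stair d N i) ⟨i, hi⟩ N (by simp [stair])
    rw [stair_step hi, stair_prod_erase hi] at step
    have h1 : bCount F (stair d N 0) ^ 2 ^ (i + 1)
        = (bCount F (stair d N 0) ^ 2 ^ i) ^ 2 := by
      rw [← pow_mul, pow_succ]
    rw [h1]
    calc (bCount F (stair d N 0) ^ 2 ^ i) ^ 2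
        ≤ (Fintype.card A ^ (∑ t ∈ Finset.range i, 2 ^ (i - 1 - t) *
            ((2 * N + 1) ^ t * (N + 1) ^ (d - 1 - t))) * bCount F (stair d N i)) ^ 2 :=
          Nat.pow_le_pow_left (ih (le_of_lt hi)) 2
      _ = Fintype.card A ^ (2 * ∑ t ∈ Finset.range i, 2 ^ (i - 1 - t) *
            ((2 * N + 1) ^ t * (N + 1) ^ (d - 1 - t))) * bCount F (stair d N i) ^ 2 := by
          rw [mul_pow, ← pow_mul, Nat.mul_comm (∑ t ∈ Finset.range i, 2 ^ (i - 1 - t) *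
            ((2 * N + 1) ^ t * (N + 1) ^ (d - 1 - t))) 2]
      _ ≤ Fintype.card A ^ (2 * ∑ t ∈ Finset.range i, 2 ^ (i - 1 - t) *
            ((2 * N + 1) ^ t * (N + 1) ^ (d - 1 - t))) *
          (Fintype.card A ^ ((2 * N + 1) ^ i * (N + 1) ^ (d - 1 - i)) *
            bCount F (stair d N (i + 1))) := Nat.mul_le_mul_left _ step
      _ = Fintype.card A ^ (2 * (∑ t ∈ Finset.range i, 2 ^ (i - 1 - t) *
            ((2 * N + 1) ^ t * (N + 1) ^ (d - 1 - t)))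
            + (2 * N + 1) ^ i * (N + 1) ^ (d - 1 - i)) * bCount F (stair d N (i + 1)) := by
          rw [pow_add]
          ring
      _ = Fintype.card A ^ (∑ t ∈ Finset.range (i + 1), 2 ^ (i + 1 - 1 - t) *
            ((2 * N + 1) ^ t * (N + 1) ^ (d - 1 - t))) * bCount F (stair d N (i + 1)) := by
          congr 2
          rw [Finset.sum_range_succ, Finset.mul_sum]
          congr 1
          · apply Finset.sum_congr rfl
            intro t ht
            have ht' : t < i := Finset.mem_range.mp ht
            have he : i + 1 - 1 - t = (i - 1 - t) + 1 := by omega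
            rw [he, pow_succ]
            ring
          · have : i + 1 - 1 - i = 0 := by omega
            rw [this, pow_zero, one_mul]


lemma cube_double (hF : ∀ (i : Fin d) (a b : A), (a, b) ∈ F i ↔ (b, a) ∈ F i) (N : ℕ) :
    patCount d F (N + 1) ^ 2 ^ d * Fintype.card A ^ ((2 * N + 1) ^ d) ≤
      Fintype.card A ^ ((2 * N + 2) ^ d) * patCount d F (2 * N + 1) := by
  have h := stair_chain F hF N d le_rfl
  have h0 : stair d N 0 = fun _ : Fin d => N + 1 := by
    funext j
    simp [stair]
  have hd' : stair d N d = fun _ : Fin d => 2 * N + 1 := by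
    funext j
    simp [stair, j.2]
  rw [h0, hd', bCount_eq_patCount, bCount_eq_patCount] at h
  have hsum : (∑ t ∈ Finset.range d, 2 ^ (d - 1 - t) *
      ((2 * N + 1) ^ t * (N + 1) ^ (d - 1 - t)))
      = ∑ t ∈ Finset.range d, (2 * N + 1) ^ t * (2 * N + 1 + 1) ^ (d - 1 - t) := by
    apply Finset.sum_congr rfl
    intro t _
    have e : (2 * N + 1 + 1) = 2 * (N + 1) := by ring
    rw [e, mul_pow]
    ring
  have hgeom := geom_id (2 * N + 1) d
  have e2 : 2 * N + 1 + 1 = 2 * N + 2 := by omega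
  rw [e2] at hsum hgeom
  calc patCount d F (N + 1) ^ 2 ^ d * Fintype.card A ^ ((2 * N + 1) ^ d)
      ≤ (Fintype.card A ^ (∑ t ∈ Finset.range d, 2 ^ (d - 1 - t) *
          ((2 * N + 1) ^ t * (N + 1) ^ (d - 1 - t))) * patCount d F (2 * N + 1)) *
          Fintype.card A ^ ((2 * N + 1) ^ d) := Nat.mul_le_mul_right _ h
    _ = Fintype.card A ^ ((∑ t ∈ Finset.range d, (2 * N + 1) ^ t * (2 * N + 2) ^ (d - 1 - t))
          + (2 * N + 1) ^ d) * patCount d F (2 * N + 1) := by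
        rw [pow_add, hsum]
        ring
    _ = Fintype.card A ^ ((2 * N + 2) ^ d) * patCount d F (2 * N + 1) := by
        rw [hgeom]

lemma patCount_pos (hF : ∀ (i : Fin d) (a b : A), (a, b) ∈ F i ↔ (b, a) ∈ F i)
    (h2 : 0 < patCount d F 2) (n : ℕ) : 0 < patCount d F n := by
  rw [← bCount_eq_patCount]
  exact bCount_pos F hF h2 _

lemma patCount_mul (n m : ℕ) (hn : 0 < n) :
    patCount d F (n * m) ≤ patCount d F n ^ m ^ d := by
  rw [← bCount_eq_patCount, ← bCount_eq_patCount]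
  exact bCount_mul F n m hn

lemma qReal_ge (d : ℕ) (x : ℝ) (hx : 0 ≤ x) : (x + 1) ^ d - x ^ d ≤ qReal d x := by
  have hexp : (x + 1) ^ d = (∑ k ∈ Finset.range d, x ^ k * (d.choose k : ℝ)) + x ^ d := by
    rw [add_pow]
    rw [Finset.sum_range_succ]
    simp
  have h1 : (x + 1) ^ d - x ^ d = ∑ k ∈ Finset.range d, x ^ k * (d.choose k : ℝ) := by
    rw [hexp]
    ring
  rw [h1, qReal, Finset.mul_sum]
  apply Finset.sum_le_sum
  intro k hk
  have hkd : k < d := Finset.mem_range.mp hk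
  have hpow : (2 : ℝ) ^ k < 2 ^ d := by
    apply pow_lt_pow_right₀ one_lt_two hkd
  have hpos : (0 : ℝ) < 2 ^ d - 2 ^ k := by linarith
  have hone : (1 : ℝ) ≤ 2 ^ k := one_le_pow₀ one_le_two
  have hle : (2 : ℝ) ^ d - 2 ^ k ≤ 2 ^ d - 1 := by linarith
  have hfrac : (1 : ℝ) ≤ (2 ^ d - 1) / (2 ^ d - 2 ^ k) := (one_le_div hpos).mpr hle
  have hnn : (0 : ℝ) ≤ x ^ k * (d.choose k : ℝ) := by positivity
  calc x ^ k * (d.choose k : ℝ) = x ^ k * (d.choose k : ℝ) * 1 := by ring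
    _ ≤ x ^ k * (d.choose k : ℝ) * ((2 ^ d - 1) / (2 ^ d - 2 ^ k)) :=
        mul_le_mul_of_nonneg_left hfrac hnn
    _ = (2 ^ d - 1) * ((d.choose k : ℝ) / (2 ^ d - 2 ^ k) * x ^ k) := by ring

end Aux

open Filter in
/-- main theorem: if `C_2 > 0` and `L = lim (1/n^d) log C_n`, then for every
`n ≥ 1`, `(1/n^d)(log C_{n+1} − q_d(n) log |Σ|) ≤ L ≤ (1/n^d) log C_n`. -/
theorem entropy_two_sided_bounds
    {A : Type*} [Fintype A] [Nonempty A]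
    (d : ℕ) (hd : 1 ≤ d) (F : Fin d → Set (A × A))
    (hF : ∀ (i : Fin d) (a b : A), (a, b) ∈ F i ↔ (b, a) ∈ F i)
    (h2 : 0 < patCount d F 2) (L : ℝ)
    (hL : Tendsto (fun n : ℕ => (1 / (n : ℝ) ^ d) * Real.log (patCount d F n)) atTop
      (nhds L)) :
    ∀ n : ℕ, 1 ≤ n →
      (1 / (n : ℝ) ^ d) *
          (Real.log (patCount d F (n + 1)) - qReal d n * Real.log (Fintype.card A)) ≤ L ∧
        L ≤ (1 / (n : ℝ) ^ d) * Real.log (patCount d F n) := by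
  intro n hn
  have hcardA : 0 < Fintype.card A := Fintype.card_pos
  have hA1 : (1 : ℝ) ≤ (Fintype.card A : ℝ) := by exact_mod_cast hcardA
  have hX : 0 ≤ Real.log (Fintype.card A) := Real.log_nonneg hA1
  have hpos : ∀ m : ℕ, 0 < patCount d F m := patCount_pos F hF h2
  have hge1 : ∀ m : ℕ, (1 : ℝ) ≤ (patCount d F m : ℝ) := fun m => by exact_mod_cast hpos m
  have hcpos : ∀ m : ℕ, (0 : ℝ) < (patCount d F m : ℝ) := fun m => by exact_mod_cast hpos m
  have hn' : (0 : ℝ) < (n : ℝ) := by exact_mod_cast hn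
  have hnd : (0 : ℝ) < (n : ℝ) ^ d := by positivity
  constructor
  · -- LOWER BOUND
    have dbl : ∀ N : ℕ, (2 : ℝ) ^ d * Real.log (patCount d F (N + 1)) ≤
        Real.log (patCount d F (2 * N + 1)) +
          ((2 * (N : ℝ) + 2) ^ d - (2 * (N : ℝ) + 1) ^ d) * Real.log (Fintype.card A) := by
      intro N
      have hnat := cube_double F hF N
      have hposL : 0 < patCount d F (N + 1) ^ 2 ^ d * Fintype.card A ^ ((2 * N + 1) ^ d) :=
        Nat.mul_pos (pow_pos (hpos _) _) (pow_pos hcardA _)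
      have hcastle : ((patCount d F (N + 1) ^ 2 ^ d * Fintype.card A ^ ((2 * N + 1) ^ d) : ℕ) : ℝ)
          ≤ ((Fintype.card A ^ ((2 * N + 2) ^ d) * patCount d F (2 * N + 1) : ℕ) : ℝ) := by
        exact_mod_cast hnat
      have hlog := Real.log_le_log (by exact_mod_cast hposL) hcastle
      have hA0 : (0 : ℝ) < (Fintype.card A : ℝ) := by exact_mod_cast hcardA
      rw [Nat.cast_mul, Nat.cast_mul, Nat.cast_pow, Nat.cast_pow, Nat.cast_pow,
        Real.log_mul (ne_of_gt (pow_pos (hcpos _) _)) (ne_of_gt (pow_pos hA0 _)),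
        Real.log_mul (ne_of_gt (pow_pos hA0 _)) (ne_of_gt (hcpos _)),
        Real.log_pow, Real.log_pow, Real.log_pow] at hlog
      push_cast at hlog
      push_cast
      linarith
    have main : ∀ t : ℕ, Real.log (patCount d F (n + 1)) ≤
        (1 / (2 : ℝ) ^ (d * t)) * Real.log (patCount d F (2 ^ t * n + 1)) +
          (((n : ℝ) + 1) ^ d - ((n : ℝ) + (1 / 2 : ℝ) ^ t) ^ d) * Real.log (Fintype.card A) := by
      intro t
      induction t with
      | zero => simp
      | succ t ih =>
        have hstep := dbl (2 ^ t * n)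
        have e1 : 2 * (2 ^ t * n) + 1 = 2 ^ (t + 1) * n + 1 := by ring
        rw [e1] at hstep
        -- cast identities
        have h2t : (0 : ℝ) < (2 : ℝ) ^ t := by positivity
        have h2t1 : (0 : ℝ) < (2 : ℝ) ^ (t + 1) := by positivity
        have h2dt1 : (0 : ℝ) < (2 : ℝ) ^ (d * (t + 1)) := by positivity
        have hN : ((2 ^ t * n : ℕ) : ℝ) = (2 : ℝ) ^ t * (n : ℝ) := by push_cast; ring
        rw [hN] at hstep
        have hCU : (1 / (2 : ℝ) ^ (d * (t + 1))) * (2 * ((2 : ℝ) ^ t * (n : ℝ)) + 2) ^ d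
            = ((n : ℝ) + (1 / 2 : ℝ) ^ t) ^ d := by
          have hpow : (2 : ℝ) ^ (d * (t + 1)) = ((2 : ℝ) ^ (t + 1)) ^ d := by
            rw [← pow_mul, Nat.mul_comm]
          rw [hpow, one_div, ← inv_pow, ← mul_pow]
          congr 1
          rw [div_pow, one_pow, pow_succ]
          have hz : ((2 : ℝ) ^ t) ≠ 0 := by positivity
          field_simp
        have hCV : (1 / (2 : ℝ) ^ (d * (t + 1))) * (2 * ((2 : ℝ) ^ t * (n : ℝ)) + 1) ^ d
            = ((n : ℝ) + (1 / 2 : ℝ) ^ (t + 1)) ^ d := by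
          have hpow : (2 : ℝ) ^ (d * (t + 1)) = ((2 : ℝ) ^ (t + 1)) ^ d := by
            rw [← pow_mul, Nat.mul_comm]
          rw [hpow, one_div, ← inv_pow, ← mul_pow]
          congr 1
          rw [div_pow, one_pow, pow_succ]
          have hz : ((2 : ℝ) ^ t) ≠ 0 := by positivity
          field_simp
        have hmul := mul_le_mul_of_nonneg_left hstep (le_of_lt (one_div_pos.mpr h2dt1))
        have hco : (1 / (2 : ℝ) ^ (d * (t + 1))) * ((2 : ℝ) ^ d *
            Real.log (patCount d F (2 ^ t * n + 1)))
            = (1 / (2 : ℝ) ^ (d * t)) * Real.log (patCount d F (2 ^ t * n + 1)) := by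
          have hpow : (2 : ℝ) ^ (d * (t + 1)) = (2 : ℝ) ^ (d * t) * (2 : ℝ) ^ d := by
            rw [Nat.mul_succ, pow_add]
          rw [hpow]
          field_simp
        rw [hco] at hmul
        have hexpand : (1 / (2 : ℝ) ^ (d * (t + 1))) *
            (Real.log (patCount d F (2 ^ (t + 1) * n + 1)) +
              ((2 * ((2 : ℝ) ^ t * (n : ℝ)) + 2) ^ d - (2 * ((2 : ℝ) ^ t * (n : ℝ)) + 1) ^ d) *
                Real.log (Fintype.card A))
            = (1 / (2 : ℝ) ^ (d * (t + 1))) * Real.log (patCount d F (2 ^ (t + 1) * n + 1)) +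
              (((n : ℝ) + (1 / 2 : ℝ) ^ t) ^ d - ((n : ℝ) + (1 / 2 : ℝ) ^ (t + 1)) ^ d) *
                Real.log (Fintype.card A) := by
          rw [← hCU, ← hCV]
          ring
        rw [hexpand] at hmul
        linarith
    -- pass to the limit in t
    have hMtend : Tendsto (fun t : ℕ => 2 ^ t * n + 1) atTop atTop := by
      apply tendsto_atTop_mono (f := fun t : ℕ => t)
      · intro t
        calc t ≤ 2 ^ t := le_of_lt (Nat.lt_two_pow_self (n := t))
          _ ≤ 2 ^ t * n := Nat.le_mul_of_pos_right _ hn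
          _ ≤ 2 ^ t * n + 1 := Nat.le_succ _
      · exact tendsto_id
    have hhalf : Tendsto (fun t : ℕ => ((1 : ℝ) / 2) ^ t) atTop (nhds 0) :=
      tendsto_pow_atTop_nhds_zero_of_lt_one (by norm_num) (by norm_num)
    have hg1 : Tendsto (fun t : ℕ => ((n : ℝ) + (1 / 2 : ℝ) ^ t) ^ d) atTop
        (nhds ((n : ℝ) ^ d)) := by
      have := (tendsto_const_nhds (x := (n : ℝ)) (f := atTop)).add hhalf
      rw [add_zero] at this
      exact this.pow d
    have hg2 : Tendsto (fun t : ℕ =>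
        (1 / ((2 ^ t * n + 1 : ℕ) : ℝ) ^ d) * Real.log (patCount d F (2 ^ t * n + 1)))
        atTop (nhds L) := hL.comp hMtend
    have heq : ∀ t : ℕ, (1 / (2 : ℝ) ^ (d * t)) * Real.log (patCount d F (2 ^ t * n + 1))
        = ((n : ℝ) + (1 / 2 : ℝ) ^ t) ^ d *
          ((1 / ((2 ^ t * n + 1 : ℕ) : ℝ) ^ d) * Real.log (patCount d F (2 ^ t * n + 1))) := by
      intro t
      have hM : (0 : ℝ) < ((2 ^ t * n + 1 : ℕ) : ℝ) := by positivity
      have hMv : ((2 ^ t * n + 1 : ℕ) : ℝ) = 2 ^ t * (n : ℝ) + 1 := by push_cast; ring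
      have hfrac : ((n : ℝ) + (1 / 2 : ℝ) ^ t) = ((2 ^ t * n + 1 : ℕ) : ℝ) / (2 : ℝ) ^ t := by
        rw [hMv, eq_div_iff (by positivity)]
        rw [div_pow, one_pow]
        field_simp
      rw [hfrac, div_pow]
      rw [hMv] at hM ⊢
      have h2dt : (2 : ℝ) ^ (d * t) = ((2 : ℝ) ^ t) ^ d := by rw [← pow_mul, Nat.mul_comm]
      rw [h2dt]
      field_simp
    have hlim : Tendsto (fun t : ℕ =>
        (1 / (2 : ℝ) ^ (d * t)) * Real.log (patCount d F (2 ^ t * n + 1)) +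
          (((n : ℝ) + 1) ^ d - ((n : ℝ) + (1 / 2 : ℝ) ^ t) ^ d) * Real.log (Fintype.card A))
        atTop (nhds ((n : ℝ) ^ d * L +
          (((n : ℝ) + 1) ^ d - (n : ℝ) ^ d) * Real.log (Fintype.card A))) := by
      apply Tendsto.add
      · have := hg1.mul hg2
        apply this.congr
        intro t
        exact (heq t).symm
      · exact (tendsto_const_nhds.sub hg1).mul_const _
    have hfin : Real.log (patCount d F (n + 1)) ≤
        (n : ℝ) ^ d * L + (((n : ℝ) + 1) ^ d - (n : ℝ) ^ d) * Real.log (Fintype.card A) :=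
      ge_of_tendsto hlim (Eventually.of_forall main)
    have hq := qReal_ge d (n : ℝ) (le_of_lt hn')
    have hq2 : (((n : ℝ) + 1) ^ d - (n : ℝ) ^ d) * Real.log (Fintype.card A) ≤
        qReal d (n : ℝ) * Real.log (Fintype.card A) := mul_le_mul_of_nonneg_right hq hX
    have h5 : Real.log (patCount d F (n + 1)) - qReal d (n : ℝ) * Real.log (Fintype.card A) ≤
        (n : ℝ) ^ d * L := by linarith
    have h6 := mul_le_mul_of_nonneg_left h5 (le_of_lt (one_div_pos.mpr hnd))
    calc (1 / (n : ℝ) ^ d) *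
        (Real.log (patCount d F (n + 1)) - qReal d (n : ℝ) * Real.log (Fintype.card A))
        ≤ (1 / (n : ℝ) ^ d) * ((n : ℝ) ^ d * L) := h6
      _ = L := by field_simp
  · -- UPPER BOUND
    have key : ∀ m : ℕ, 1 ≤ m →
        (1 / ((n * m : ℕ) : ℝ) ^ d) * Real.log (patCount d F (n * m)) ≤
          (1 / (n : ℝ) ^ d) * Real.log (patCount d F n) := by
      intro m hm
      have hm' : (0 : ℝ) < (m : ℝ) := by exact_mod_cast hm
      have hcount := patCount_mul F n m hn
      have hlog : Real.log (patCount d F (n * m)) ≤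
          (m : ℝ) ^ d * Real.log (patCount d F n) := by
        have hcle : ((patCount d F (n * m) : ℕ) : ℝ) ≤ ((patCount d F n ^ m ^ d : ℕ) : ℝ) := by
          exact_mod_cast hcount
        have := Real.log_le_log (hcpos (n * m)) hcle
        rw [Nat.cast_pow, Real.log_pow] at this
        push_cast at this
        exact this
      have hcast : ((n * m : ℕ) : ℝ) ^ d = (n : ℝ) ^ d * (m : ℝ) ^ d := by
        push_cast
        rw [mul_pow]
      rw [hcast]
      have hnm : (0 : ℝ) < (n : ℝ) ^ d * (m : ℝ) ^ d := by positivity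
      calc (1 / ((n : ℝ) ^ d * (m : ℝ) ^ d)) * Real.log (patCount d F (n * m))
          ≤ (1 / ((n : ℝ) ^ d * (m : ℝ) ^ d)) * ((m : ℝ) ^ d * Real.log (patCount d F n)) :=
            mul_le_mul_of_nonneg_left hlog (le_of_lt (one_div_pos.mpr hnm))
        _ = (1 / (n : ℝ) ^ d) * Real.log (patCount d F n) := by
            field_simp
    have hmul_tend : Tendsto (fun m : ℕ => n * m) atTop atTop := by
      apply tendsto_atTop_mono (f := fun m : ℕ => m)
      · intro m
        exact Nat.le_mul_of_pos_left _ hn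
      · exact tendsto_id
    have hsub : Tendsto (fun m : ℕ =>
        (1 / ((n * m : ℕ) : ℝ) ^ d) * Real.log (patCount d F (n * m))) atTop (nhds L) :=
      hL.comp hmul_tend
    exact le_of_tendsto hsub (eventually_atTop.mpr ⟨1, key⟩)
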